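/- Let κ ≤ δ be infinite cardinals and let U be a (κ,δ)-regular ultrafilter. Then U is η-decomposable for every regular cardinal η with κ ≤ η ≤ δ. -/
import Mathlib


open Filter Set Cardinal

universe u v w

/-- The left tensor product `F ⋉ G` of two filters. -/
def ltimes {X : Type u} {Y : Type v} (F : Filter X) (G : Filter Y) :
    Filter (X × Y) where
  sets := {R | {x | {y | (x, y) ∈ R} ∈ G} ∈ F}
  univ_sets := by simp
  sets_of_superset := by
    intro R S hR hRS
    refine Filter.mem_of_superset hR ?_
    intro x hx
    exact Filter.mem_of_superset hx fun y hy => hRS hy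
  inter_sets := by
    intro R S hR hS
    refine Filter.mem_of_superset (Filter.inter_mem hR hS) ?_
    rintro x ⟨hx1, hx2⟩
    exact Filter.inter_mem hx1 hx2

/-- The right tensor product `F ⋊ G` of two filters. -/
def rtimes {X : Type u} {Y : Type v} (F : Filter X) (G : Filter Y) :
    Filter (X × Y) where
  sets := {R | {y | {x | (x, y) ∈ R} ∈ F} ∈ G}
  univ_sets := by simp
  sets_of_superset := by
    intro R S hR hRS
    refine Filter.mem_of_superset hR ?_
    intro y hy
    exact Filter.mem_of_superset hy fun x hx => hRS hx
  inter_sets := by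
    intro R S hR hS
    refine Filter.mem_of_superset (Filter.inter_mem hR hS) ?_
    rintro y ⟨hy1, hy2⟩
    exact Filter.inter_mem hy1 hy2

/-- `IsFClosed F G` means: `G` is `F`-closed. -/
def IsFClosed {X : Type u} {Y : Type v} (F : Filter X) (G : Filter Y) : Prop :=
  ∀ B : X → Set Y, (∀ x, B x ∈ G) → ∃ A ∈ F, (⋂ x ∈ A, B x) ∈ G

/-- `IsRegularFor F G` means: `F` is `G`-regular. -/
def IsRegularFor {X : Type u} {Y : Type v} (F : Filter X) (G : Filter Y) : Prop :=
  ∃ A : Y → Set X, (∀ y, A y ∈ F) ∧ ∀ B : Set Y, Bᶜ ∉ G → (⋂ y ∈ B, A y) = ∅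

/-- The Katetov order on filters: `G ≤kat H` iff some pushforward of `H` extends `G`. -/
def Katetov {Y : Type u} {Z : Type v} (G : Filter Y) (H : Filter Z) : Prop :=
  ∃ f : Z → Y, Filter.map f H ≤ G

/-- A filter is an ultrafilter. -/
def IsUltra {α : Type u} (F : Filter α) : Prop :=
  ∃ V : Ultrafilter α, (V : Filter α) = F

/-- `(λ, η)`-indecomposability of a filter. -/
def Indecomposable {X : Type u} (F : Filter X) (lam eta : Cardinal.{u}) : Prop :=
  ∀ P : Set (Set X), #P ≤ eta → ⋃₀ P ∈ F →
    ∃ Q ⊆ P, #Q < lam ∧ ⋃₀ Q ∈ F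

/-- `λ`-decomposability: the negation of `(λ, λ)`-indecomposability. -/
def Decomposable {X : Type u} (F : Filter X) (lam : Cardinal.{u}) : Prop :=
  ¬ Indecomposable F lam lam

/-- `(κ, δ)`-regularity of a filter. -/
def CardRegular {X : Type u} (F : Filter X) (kappa delta : Cardinal.{u}) : Prop :=
  ∃ B : delta.out → Set X, (∀ α, B α ∈ F) ∧
    ∀ σ : Set delta.out, kappa ≤ #σ → (⋂ α ∈ σ, B α) = ∅

/-- The Fréchet filter `F_λ(λ)`: subsets of (a set of size) `λ` whose complement
has cardinality less than `λ`. -/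
def frechetFilter (lam : Cardinal.{u}) (h : ℵ₀ ≤ lam) : Filter lam.out where
  sets := {A | #(Aᶜ : Set lam.out) < lam}
  univ_sets := by
    have : #((Set.univ : Set lam.out)ᶜ : Set lam.out) = 0 := by simp
    simp only [Set.mem_setOf_eq, this]
    exact lt_of_lt_of_le aleph0_pos h
  sets_of_superset := by
    intro A B hA hAB
    exact lt_of_le_of_lt (Cardinal.mk_le_mk_of_subset (Set.compl_subset_compl.mpr hAB)) hA
  inter_sets := by
    intro A B hA hB
    simp only [Set.mem_setOf_eq, Set.compl_inter]
    exact lt_of_le_of_lt (Cardinal.mk_union_le _ _) (Cardinal.add_lt_of_lt h hA hB)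

/-- The dual of a filter `F` on `X`: the family of complements of members of `F`. -/
def dualFamily {X : Type u} (F : Filter X) : Set (Set X) := {s | sᶜ ∈ F}

/-- The fine filter `𝔽(F)` on the dual of `F`, generated by the sets
`{σ ∈ F* | x ∈ σ}` for `x ∈ X`. -/
def fineFilter {X : Type u} (F : Filter X) : Filter (dualFamily F) :=
  Filter.generate (Set.range fun x : X => {σ : dualFamily F | x ∈ σ.1})

theorem decomposable_of_regular {X : Type u} (U : Ultrafilter X)
    (kappa delta : Cardinal.{u}) (hk : ℵ₀ ≤ kappa) (hkd : kappa ≤ delta)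
    (hreg : CardRegular (U : Filter X) kappa delta) :
    ∀ eta : Cardinal.{u}, eta.IsRegular → kappa ≤ eta → eta ≤ delta →
      Decomposable (U : Filter X) eta := by
  intro eta hetar hke hed
  haveI : IsWellOrder eta.ord.ToType (· < ·) := isWellOrder_lt
  obtain ⟨B, hB, hBcap⟩ := hreg
  have hcard : #(eta.ord.ToType) = eta := by rw [Cardinal.mk_toType, Cardinal.card_ord]
  have hle : #eta.ord.ToType ≤ #(delta.out) := by rw [hcard, Cardinal.mk_out]; exact hed
  obtain ⟨e⟩ := (Cardinal.le_def _ _).mp hle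
  set C : eta.ord.ToType → Set X := fun a => B (e a) with hC
  -- each x belongs to fewer than kappa of the sets C a
  have hsmall : ∀ x : X, #{a : eta.ord.ToType | x ∈ C a} < kappa := by
    intro x
    by_contra h
    push_neg at h
    have him : kappa ≤ #(e '' {a : eta.ord.ToType | x ∈ C a}) := by
      rwa [Cardinal.mk_image_eq e.injective]
    have hcap := hBcap _ him
    have hx : x ∈ ⋂ α ∈ e '' {a : eta.ord.ToType | x ∈ C a}, B α := by
      simp only [Set.mem_iInter]
      rintro α ⟨a, ha, rfl⟩
      exact ha
    rw [hcap] at hx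
    exact hx
  -- the rank function
  set f : X → Ordinal.{u} := fun x =>
    iSup (fun a : {a : eta.ord.ToType | x ∈ C a} => Ordinal.typein (α := eta.ord.ToType) (· < ·) a.1) with hf
  have hflt : ∀ x, f x < eta.ord := by
    intro x
    apply Cardinal.iSup_lt_ord_of_isRegular hetar ((hsmall x).trans_le hke)
    intro a
    exact Ordinal.typein_lt_self a.1
  have hfle : ∀ (x : X) (a : eta.ord.ToType), x ∈ C a → Ordinal.typein (α := eta.ord.ToType) (· < ·) a ≤ f x := by
    intro x a hx
    exact Ordinal.le_iSup _ (⟨a, hx⟩ : {a : eta.ord.ToType | x ∈ C a})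
  -- the partition
  set P : Set (Set X) := Set.range (fun a : eta.ord.ToType => {x | f x = Ordinal.typein (α := eta.ord.ToType) (· < ·) a})
    with hP
  intro hind
  obtain ⟨Q, hQP, hQcard, hQU⟩ := hind P (Cardinal.mk_range_le.trans hcard.le)
    (by
      have : ⋃₀ P = Set.univ := by
        ext x
        simp only [Set.mem_sUnion, Set.mem_univ, iff_true]
        have hx := hflt x
        obtain ⟨a, ha⟩ := Ordinal.typein_surj (α := eta.ord.ToType) (· < ·)
          (by rwa [Ordinal.type_toType] : _ < Ordinal.type (α := eta.ord.ToType) (· < ·))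
        exact ⟨_, Set.mem_range_self a, ha.symm⟩
      rw [this]
      exact Filter.univ_mem)
  -- pick indices for the members of Q
  have hch : ∀ q : Q, ∃ a : eta.ord.ToType, {x | f x = Ordinal.typein (α := eta.ord.ToType) (· < ·) a} = (q : Set X) :=
    fun q => hQP q.2
  choose g hg using hch
  have hsup : iSup (fun q : Q => Ordinal.typein (α := eta.ord.ToType) (· < ·) (g q)) < eta.ord :=
    Cardinal.iSup_lt_ord_of_isRegular hetar hQcard (fun q => Ordinal.typein_lt_self (g q))
  have hsucc : Order.succ (iSup (fun q : Q => Ordinal.typein (α := eta.ord.ToType) (· < ·) (g q)))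
      < eta.ord := (Cardinal.isSuccLimit_ord hetar.aleph0_le).succ_lt hsup
  obtain ⟨b, hb⟩ := Ordinal.typein_surj (α := eta.ord.ToType) (· < ·)
    (by rwa [Ordinal.type_toType] : _ < Ordinal.type (α := eta.ord.ToType) (· < ·))
  -- C b ∈ U and C b is disjoint from ⋃₀ Q
  obtain ⟨x, hxQ, hxb⟩ := Filter.nonempty_of_mem (Filter.inter_mem hQU (hB (e b)))
  obtain ⟨q, hqQ, hxq⟩ := hxQ
  have h1 : f x = Ordinal.typein (α := eta.ord.ToType) (· < ·) (g ⟨q, hqQ⟩) := by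
    have h := hg ⟨q, hqQ⟩
    have hx2 : x ∈ {y | f y = Ordinal.typein (α := eta.ord.ToType) (· < ·) (g ⟨q, hqQ⟩)} := by
      rw [h]; exact hxq
    exact hx2
  have h2 : Ordinal.typein (α := eta.ord.ToType) (· < ·) b ≤ f x := hfle x b hxb
  rw [hb, h1] at h2
  exact absurd (Ordinal.le_iSup (fun q : Q => Ordinal.typein (α := eta.ord.ToType) (· < ·) (g q)) ⟨q, hqQ⟩)
    (not_le.mpr ((Order.lt_succ _).trans_le h2))
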